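/- Let $(D, \{\prec_\alpha, \succ_\alpha\}_{\alpha \in \Omega})$ be a dendriform family algebra. Then the vector space $D \otimes k\Omega$ with the operations $(x\otimes\alpha) \prec (y\otimes\beta) = (x \prec_\beta y)\otimes\alpha\beta$ and $(x\otimes\alpha) \succ (y\otimes\beta) = (x \succ_\alpha y)\otimes\alpha\beta$ is a dendriform algebra. -/

import Mathlib

/-- A dendriform family algebra `(D, {≺_α, ≻_α})` induces a dendriform algebra
on `D ⊗ kΩ` (modelled as `Ω →₀ D`, with `single α x ↔ x ⊗ α`), where
`(x⊗α) ≺ (y⊗β) = (x ≺_β y) ⊗ αβ` and `(x⊗α) ≻ (y⊗β) = (x ≻_α y) ⊗ αβ`. -/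
theorem dendriform_family_algebra_induces_dendriform_algebra
    {k Ω D : Type*} [Field k] [Semigroup Ω]
    [AddCommGroup D] [Module k D]
    (p s : Ω → D →ₗ[k] D →ₗ[k] D)
    (hd1 : ∀ (α β : Ω) (x y z : D),
      p β (p α x y) z = p (α * β) x (p β y z + s α y z))
    (hd2 : ∀ (α β : Ω) (x y z : D),
      p β (s α x y) z = s α x (p β y z))
    (hd3 : ∀ (α β : Ω) (x y z : D),
      s (α * β) (p β x y + s α x y) z = s α x (s β y z))
    (P S : (Ω →₀ D) →ₗ[k] (Ω →₀ D) →ₗ[k] (Ω →₀ D))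
    (hP : ∀ (α β : Ω) (x y : D),
      P (Finsupp.single α x) (Finsupp.single β y) = Finsupp.single (α * β) (p β x y))
    (hS : ∀ (α β : Ω) (x y : D),
      S (Finsupp.single α x) (Finsupp.single β y) = Finsupp.single (α * β) (s α x y)) :
    (∀ x y z : Ω →₀ D, P (P x y) z = P x (P y z + S y z)) ∧
    (∀ x y z : Ω →₀ D, P (S x y) z = S x (P y z)) ∧
    (∀ x y z : Ω →₀ D, S (P x y + S x y) z = S x (S y z)) := by
  refine ⟨?_, ?_, ?_⟩ <;>
  · intro x y z
    induction x using Finsupp.induction_linear with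
    | zero => simp
    | add f g hf hg =>
      simp only [map_add, LinearMap.add_apply] at hf hg ⊢
      first | rw [hf, hg] | rw [← hf, ← hg]
      try abel
    | single α a =>
      induction y using Finsupp.induction_linear with
      | zero => simp
      | add f g hf hg =>
        simp only [map_add, LinearMap.add_apply] at hf hg ⊢
        first | rw [hf, hg] | rw [← hf, ← hg]
        try abel
      | single β b =>
        induction z using Finsupp.induction_linear with
        | zero => simp
        | add f g hf hg =>
          simp only [map_add, LinearMap.add_apply] at hf hg ⊢
          first | rw [hf, hg] | rw [← hf, ← hg]
          try abel
        | single γ c =>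
          simp only [hP, hS, ← Finsupp.single_add, ← map_add]
          rw [mul_assoc]
          first | rw [hd1] | rw [hd2] | rw [hd3]
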